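/- For t < 0 and |s| < 2|t|, the function u(t,s) = −2t/(4t² − s²) is positive and satisfies ∂u/∂t = ∂²(log u)/∂s², and the curvature R(t,s) = −(1/u)·∂²(log u)/∂s² = (1/t)·(4t² + s²)/(4t² − s²) satisfies R(t,s) ≤ −1/|t| < 0 with equality exactly when s = 0. -/

import Mathlib

/-- The ancient Ricci flow on an annulus: for `t < 0` and `|s| < 2|t|`,
`u(t,s) = −2t/(4t² − s²)` is positive, solves `u_t = (log u)_{ss}`, and its
curvature `R = −u⁻¹(log u)_{ss}` equals `(1/t)(4t² + s²)/(4t² − s²)`, with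
`R ≤ −1/|t| < 0` and equality exactly when `s = 0`. -/
theorem stmt_15 (u R : ℝ → ℝ → ℝ)
    (hudef : ∀ t s, u t s = -2 * t / (4 * t ^ 2 - s ^ 2))
    (hRdef : ∀ t s, R t s =
      -(1 / u t s) * deriv (fun s' => deriv (fun s'' => Real.log (u t s'')) s') s) :
    ∀ t : ℝ, t < 0 → ∀ s : ℝ, |s| < 2 * |t| →
      0 < u t s ∧
      deriv (fun t' => u t' s) t =
        deriv (fun s' => deriv (fun s'' => Real.log (u t s'')) s') s ∧
      R t s = (1 / t) * ((4 * t ^ 2 + s ^ 2) / (4 * t ^ 2 - s ^ 2)) ∧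
      R t s ≤ -1 / |t| ∧ -1 / |t| < 0 ∧ (R t s = -1 / |t| ↔ s = 0) := by
  intro t ht s hs
  have ht0 : t ≠ 0 := ne_of_lt ht
  have habst : |t| = -t := abs_of_neg ht
  have hdgen : ∀ a : ℝ, |a| < 2 * |t| → 0 < 4 * t ^ 2 - a ^ 2 := by
    intro a ha
    have h1 : |a| ^ 2 < (2 * |t|) ^ 2 := by
      apply pow_lt_pow_left₀ ha (abs_nonneg a)
      exact two_ne_zero
    rw [sq_abs] at h1
    nlinarith [sq_abs t]
  have hd : 0 < 4 * t ^ 2 - s ^ 2 := hdgen s hs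
  have hd0 : (4 * t ^ 2 - s ^ 2) ≠ 0 := ne_of_gt hd
  have hupos : 0 < u t s := by
    rw [hudef]; exact div_pos (by linarith) hd
  -- derivative of u in x
  have hU : ∀ a : ℝ, |a| < 2 * |t| →
      HasDerivAt (fun x => u t x) (-4 * t * a / (4 * t ^ 2 - a ^ 2) ^ 2) a := by
    intro a ha
    have hda : (4 * t ^ 2 - a ^ 2) ≠ 0 := ne_of_gt (hdgen a ha)
    have h1 : HasDerivAt (fun x : ℝ => 4 * t ^ 2 - x ^ 2) (-(2 * a)) a := by
      simpa using (hasDerivAt_pow 2 a).const_sub (4 * t ^ 2)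
    have h2 := (hasDerivAt_const a (-2 * t)).div h1 hda
    simp only [hudef]
    refine h2.congr_deriv ?_
    field_simp
    ring
  have hupos' : ∀ a : ℝ, |a| < 2 * |t| → 0 < u t a := by
    intro a ha
    rw [hudef]; exact div_pos (by linarith) (hdgen a ha)
  have hL : ∀ a : ℝ, |a| < 2 * |t| →
      HasDerivAt (fun x => Real.log (u t x)) (2 * a / (4 * t ^ 2 - a ^ 2)) a := by
    intro a ha
    have hda : (4 * t ^ 2 - a ^ 2) ≠ 0 := ne_of_gt (hdgen a ha)
    have h1 := (hU a ha).log (ne_of_gt (hupos' a ha))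
    convert h1 using 1
    rw [hudef]
    field_simp
    ring
  have hOpen : IsOpen {x : ℝ | |x| < 2 * |t|} := isOpen_lt continuous_abs continuous_const
  have hev : (fun s' => deriv (fun s'' => Real.log (u t s'')) s')
      =ᶠ[nhds s] (fun x => 2 * x / (4 * t ^ 2 - x ^ 2)) := by
    filter_upwards [hOpen.mem_nhds hs] with x hx
    exact (hL x hx).deriv
  have hderiv2 : deriv (fun s' => deriv (fun s'' => Real.log (u t s'')) s') s
      = (8 * t ^ 2 + 2 * s ^ 2) / (4 * t ^ 2 - s ^ 2) ^ 2 := by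
    rw [hev.deriv_eq]
    have h1 : HasDerivAt (fun x : ℝ => 4 * t ^ 2 - x ^ 2) (-(2 * s)) s := by
      simpa using (hasDerivAt_pow 2 s).const_sub (4 * t ^ 2)
    have h2 : HasDerivAt (fun x : ℝ => 2 * x) 2 s := by
      simpa using (hasDerivAt_id s).const_mul 2
    have h3 := h2.div h1 hd0
    rw [show (fun x => 2 * x / (4 * t ^ 2 - x ^ 2)) = ((fun x : ℝ => 2 * x) / fun x => 4 * t ^ 2 - x ^ 2) from rfl, h3.deriv]
    field_simp
    ring
  have htderiv : HasDerivAt (fun t' => u t' s)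
      ((8 * t ^ 2 + 2 * s ^ 2) / (4 * t ^ 2 - s ^ 2) ^ 2) t := by
    have h1 : HasDerivAt (fun t' : ℝ => 4 * t' ^ 2 - s ^ 2) (8 * t) t := by
      have := ((hasDerivAt_pow 2 t).const_mul 4).sub_const (s ^ 2)
      simpa using this.congr_deriv (by ring)
    have h2 : HasDerivAt (fun t' : ℝ => -2 * t') (-2) t := by
      simpa using (hasDerivAt_id t).const_mul (-2)
    have h3 := h2.div h1 hd0
    simp only [hudef]
    refine h3.congr_deriv ?_
    field_simp
    ring
  have hReq : R t s = (1 / t) * ((4 * t ^ 2 + s ^ 2) / (4 * t ^ 2 - s ^ 2)) := by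
    rw [hRdef, hderiv2, hudef]
    field_simp
    ring
  have hneg : -1 / |t| = 1 / t := by
    rw [habst]; field_simp
  have hdiff : R t s = 1 / t + 2 * s ^ 2 / (t * (4 * t ^ 2 - s ^ 2)) := by
    rw [hReq]; field_simp [show t ^ 2 * 4 - s ^ 2 ≠ 0 by intro h; apply hd0; linarith]; ring
  have htd : t * (4 * t ^ 2 - s ^ 2) < 0 := mul_neg_of_neg_of_pos ht hd
  have hterm : 2 * s ^ 2 / (t * (4 * t ^ 2 - s ^ 2)) ≤ 0 :=
    div_nonpos_of_nonneg_of_nonpos (by positivity) (le_of_lt htd)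
  refine ⟨hupos, ?_, hReq, ?_, ?_, ?_⟩
  · rw [htderiv.deriv, hderiv2]
  · rw [hneg, hdiff]; linarith
  · rw [hneg]
    exact div_neg_of_pos_of_neg one_pos ht
  · rw [hneg, hdiff]
    constructor
    · intro h
      have h2 : 2 * s ^ 2 / (t * (4 * t ^ 2 - s ^ 2)) = 0 := by linarith
      have h3 : 2 * s ^ 2 = 0 := by
        rcases (div_eq_zero_iff.mp h2) with h | h
        · exact h
        · exact absurd h (ne_of_lt htd)
      nlinarith [sq_nonneg s]
    · intro h; rw [h]; ring
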